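/- Let T be a finite rooted dyadic tree with boundary ∂T, and let g, G : T → ℝ≥0 be functions on the vertices of T. Suppose g is two-point superharmonic, meaning g(τ) ≥ g(τ⁺) + g(τ⁻) for every internal vertex τ with children τ⁺, τ⁻, and G is two-point harmonic, meaning G(τ) = G(τ⁺) + G(τ⁻) for every internal vertex τ. Define Ig(α) = Σ_{β ≥ α} g(β) (sum over ancestors of α including α) and similarly IG. If IG(ω) ≤ Ig(ω) for every boundary vertex ω ∈ ∂T with G(ω) > 0, then IG(α) ≤ Ig(α) for all vertices α ∈ T. -/

import Mathlib

open Finset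
open scoped Classical

noncomputable section

variable {V : Type*} [Fintype V] [PartialOrder V]

/-- Hardy operator I on the tree: sum over ancestors (larger elements). -/
def hI (f : V → ℝ) (a : V) : ℝ :=
  ∑ b ∈ Finset.univ.filter (fun b => a ≤ b), f b

/-- Adjoint Hardy operator I*: sum over descendants (smaller elements). -/
def hIs (f : V → ℝ) (a : V) : ℝ :=
  ∑ b ∈ Finset.univ.filter (fun b => b ≤ a), f b

/-- Potential V^μ = I(I*μ). -/
def pot (μ : V → ℝ) : V → ℝ := hI (hIs μ)

/-- `τ₁` and `τ₂` are precisely the two children of the internal vertex `τ`. -/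
def ChildPair (τ τ₁ τ₂ : V) : Prop :=
  τ₁ ≠ τ₂ ∧ τ₁ ⋖ τ ∧ τ₂ ⋖ τ ∧ ∀ x : V, x ⋖ τ → x = τ₁ ∨ x = τ₂

/-- Minimum principle on the tree: if `g` is two-point superharmonic, `G` is two-point
harmonic, and `IG ≤ Ig` on every boundary (leaf) vertex where `G > 0`, then `IG ≤ Ig`
on the whole tree. -/
theorem stmt0 [OrderTop V]
    (htree : ∀ a b c : V, a ≤ b → a ≤ c → b ≤ c ∨ c ≤ b)
    (hbin : ∀ τ : V, ¬ IsMin τ → ∃ τ₁ τ₂ : V, ChildPair τ τ₁ τ₂)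
    (g G : V → ℝ) (hg0 : ∀ a : V, 0 ≤ g a) (hG0 : ∀ a : V, 0 ≤ G a)
    (hsuper : ∀ τ τ₁ τ₂ : V, ChildPair τ τ₁ τ₂ → g τ₁ + g τ₂ ≤ g τ)
    (hharm : ∀ τ τ₁ τ₂ : V, ChildPair τ τ₁ τ₂ → G τ = G τ₁ + G τ₂)
    (hbdry : ∀ ω : V, IsMin ω → 0 < G ω → hI G ω ≤ hI g ω) :
    ∀ α : V, hI G α ≤ hI g α := by
  -- key: if σ ⋖ τ then hI f σ = f σ + hI f τ
  have key : ∀ σ τ : V, σ ⋖ τ → ∀ f : V → ℝ, hI f σ = f σ + hI f τ := by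
    intro σ τ hcov f
    have hset : Finset.univ.filter (fun b => σ ≤ b)
        = insert σ (Finset.univ.filter (fun b => τ ≤ b)) := by
      ext b
      simp only [mem_filter, mem_insert, mem_univ, true_and]
      constructor
      · intro hb
        rcases eq_or_lt_of_le hb with h | h
        · exact Or.inl h.symm
        · right
          rcases htree σ b τ hb hcov.le with h' | h'
          · rcases h'.lt_or_eq with h2 | h2
            · exact absurd h2 (hcov.2 h)
            · exact h2.ge
          · exact h'
      · rintro (rfl | hb)
        · exact le_refl b
        · exact hcov.le.trans hb
    have hnot : σ ∉ Finset.univ.filter (fun b => τ ≤ b) := by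
      simp only [mem_filter, mem_univ, true_and]
      exact fun h => absurd h hcov.lt.not_ge
    rw [hI, hset, Finset.sum_insert hnot]
    rfl
  by_contra hcon
  push_neg at hcon
  -- take a maximal bad vertex
  set S : Finset V := Finset.univ.filter (fun a => hI g a < hI G a) with hS
  have hSne : S.Nonempty := by
    obtain ⟨a, ha⟩ := hcon
    exact ⟨a, by simp [hS, ha]⟩
  obtain ⟨α, hαS, hαmax⟩ : ∃ m ∈ S, ∀ x ∈ S, ¬ m < x := by
    obtain ⟨m, hm⟩ := Finset.exists_maximal hSne
    exact ⟨m, hm.1, fun x hx hlt => hlt.not_ge (hm.2 hx hlt.le)⟩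
  have hαbad : hI g α < hI G α := by simpa [hS] using hαS
  -- at a maximal bad vertex, g α < G α
  have hGg : g α < G α := by
    by_cases hα : α = ⊤
    · have hfil : Finset.univ.filter (fun b => (⊤ : V) ≤ b) = {⊤} := by
        ext b; simp [top_le_iff, eq_comm]
      have h1 : hI G (⊤ : V) = G ⊤ := by rw [hI, hfil, Finset.sum_singleton]
      have h2 : hI g (⊤ : V) = g ⊤ := by rw [hI, hfil, Finset.sum_singleton]
      subst hα; rw [h1, h2] at hαbad; exact hαbad
    · have hlt : α < ⊤ := lt_top_iff_ne_top.mpr hα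
      -- find a cover β of α
      set P : Finset V := Finset.univ.filter (fun x => α < x) with hP
      have hPne : P.Nonempty := ⟨⊤, by simp [hP, hlt]⟩
      obtain ⟨β, hβP, hβmin⟩ : ∃ m ∈ P, ∀ x ∈ P, ¬ x < m := by
          obtain ⟨m, hm⟩ := Finset.exists_minimal hPne
          exact ⟨m, hm.1, fun x hx hlt => hlt.not_ge (hm.2 hx hlt.le)⟩
      have hαβ : α < β := by simpa [hP] using hβP
      have hcov : α ⋖ β := ⟨hαβ, fun c h1 h2 => hβmin c (by simp [hP, h1]) h2⟩
      have hβgood : ¬ (hI g β < hI G β) := by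
        intro hb
        exact hαmax β (by simp [hS, hb]) hαβ
      have e1 := key α β hcov G
      have e2 := key α β hcov g
      push_neg at hβgood
      linarith
  -- descend to a bad leaf with positive G
  have descent : ∀ τ : V, hI g τ < hI G τ → g τ < G τ →
      ∃ ω : V, ω ≤ τ ∧ IsMin ω ∧ 0 < G ω ∧ hI g ω < hI G ω := by
    intro τ
    induction τ using WellFoundedLT.induction with
    | ind τ IH =>
      intro hbad hgG
      by_cases hm : IsMin τ
      · exact ⟨τ, le_refl τ, hm, lt_of_le_of_lt (hg0 τ) hgG, hbad⟩
      · obtain ⟨τ₁, τ₂, hcp⟩ := hbin τ hm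
        have hsum : G τ - g τ ≤ (G τ₁ - g τ₁) + (G τ₂ - g τ₂) := by
          have h1 := hsuper τ τ₁ τ₂ hcp
          have h2 := hharm τ τ₁ τ₂ hcp
          linarith
        have hc1 : τ₁ ⋖ τ := hcp.2.1
        have hc2 : τ₂ ⋖ τ := hcp.2.2.1
        by_cases hpos : g τ₁ < G τ₁
        · have e1 := key τ₁ τ hc1 G
          have e2 := key τ₁ τ hc1 g
          have hbad1 : hI g τ₁ < hI G τ₁ := by linarith
          obtain ⟨ω, hω1, hω2, hω3, hω4⟩ := IH τ₁ hc1.lt hbad1 hpos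
          exact ⟨ω, hω1.trans hc1.le, hω2, hω3, hω4⟩
        · push_neg at hpos
          have hpos2 : g τ₂ < G τ₂ := by linarith
          have e1 := key τ₂ τ hc2 G
          have e2 := key τ₂ τ hc2 g
          have hbad2 : hI g τ₂ < hI G τ₂ := by linarith
          obtain ⟨ω, hω1, hω2, hω3, hω4⟩ := IH τ₂ hc2.lt hbad2 hpos2
          exact ⟨ω, hω1.trans hc2.le, hω2, hω3, hω4⟩
  obtain ⟨ω, _, hωmin, hωG, hωbad⟩ := descent α hαbad hGg
  exact absurd (hbdry ω hωmin hωG) (not_le.mpr hωbad)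

end
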